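/- Let K be a finite simplicial complex on n vertices over a field k of characteristic p > 0, let R = R_K be its face ring with homogeneous maximal ideal m = (x_1,…,x_n), and let q = p^r. Then the Hilbert–Kunz function satisfies HK_R(q) = length(R/m^{[q]}) = Σ_{i=−1}^{dim K} f_i (q−1)^{i+1}, where f_i is the number of i-dimensional faces of K (with f_{−1} = 1 counting the empty face) and m^{[q]} = (x_1^q,…,x_n^q). -/

import Mathlib

open MvPolynomial

/-- The Stanley–Reisner ideal of a finite simplicial complex `L` on vertices `Fin n`. -/
noncomputable def SRIdeal (k : Type*) [Field k] (n : ℕ)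
    (L : Finset (Finset (Fin n))) : Ideal (MvPolynomial (Fin n) k) :=
  Ideal.span {f | ∃ S : Finset (Fin n), S ∉ L ∧ f = ∏ i ∈ S, X i}

/-- The face ring `R_K = k[x_1,…,x_n]/I_K`. -/
noncomputable abbrev FaceRing (k : Type*) [Field k] (n : ℕ)
    (L : Finset (Finset (Fin n))) : Type _ :=
  MvPolynomial (Fin n) k ⧸ SRIdeal k n L

section Aux
variable {k : Type*} [Field k] {n q : ℕ} {K : Finset (Finset (Fin n))}

/-- The "bad" exponent monomials generating the combined ideal. -/
def hkBad (n q : ℕ) (K : Finset (Finset (Fin n))) : Set (Fin n →₀ ℕ) :=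
  {s | ∃ T : Finset (Fin n), T ∉ K ∧ s = ∑ i ∈ T, Finsupp.single i 1} ∪
    {s | ∃ i : Fin n, s = Finsupp.single i q}

lemma hk_prodX_eq (T : Finset (Fin n)) :
    (∏ i ∈ T, (X i : MvPolynomial (Fin n) k)) =
      monomial (∑ i ∈ T, Finsupp.single i 1) 1 := by
  rw [monomial_sum_one]
  refine Finset.prod_congr rfl fun i _ => ?_
  rw [← pow_one (X i), X_pow_eq_monomial]

lemma hk_sum_single_apply (T : Finset (Fin n)) (j : Fin n) :
    (∑ i ∈ T, Finsupp.single i (1 : ℕ)) j = if j ∈ T then 1 else 0 := by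
  rw [Finset.sum_apply']
  simp [Finsupp.single_apply]

lemma hk_sup_eq (k : Type*) [Field k] (n q : ℕ) (K : Finset (Finset (Fin n))) :
    (Ideal.span {f : MvPolynomial (Fin n) k | ∃ S : Finset (Fin n), S ∉ K ∧ f = ∏ i ∈ S, X i}) ⊔
        Ideal.span {f : MvPolynomial (Fin n) k | ∃ i : Fin n, f = X i ^ q} =
      Ideal.span ((fun s => monomial s (1 : k)) '' hkBad n q K) := by
  rw [← Ideal.span_union]
  congr 1
  ext f
  simp only [Set.mem_union, Set.mem_setOf_eq, Set.mem_image, hkBad]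
  constructor
  · rintro (⟨T, hT, rfl⟩ | ⟨i, rfl⟩)
    · exact ⟨_, Or.inl ⟨T, hT, rfl⟩, (hk_prodX_eq T).symm⟩
    · exact ⟨_, Or.inr ⟨i, rfl⟩, (X_pow_eq_monomial).symm⟩
  · rintro ⟨s, ⟨T, hT, rfl⟩ | ⟨i, rfl⟩, rfl⟩
    · exact Or.inl ⟨T, hT, (hk_prodX_eq T).symm⟩
    · exact Or.inr ⟨i, X_pow_eq_monomial.symm⟩

lemma hk_mem_iff (hK : ∀ σ ∈ K, ∀ τ : Finset (Fin n), τ ⊆ σ → τ ∈ K)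
    (f : MvPolynomial (Fin n) k) :
    f ∈ Ideal.span ((fun s => monomial s (1 : k)) '' hkBad n q K) ↔
      ∀ e ∈ f.support, ¬((∀ i, e i < q) ∧ e.support ∈ K) := by
  rw [mem_ideal_span_monomial_image]
  refine forall₂_congr fun e he => ?_
  rw [not_and_or, not_forall]
  constructor
  · rintro ⟨s, hs | hs, hle⟩
    · obtain ⟨T, hT, rfl⟩ := hs
      refine Or.inr fun hsupp => hT (hK _ hsupp _ fun i hi => Finsupp.mem_support_iff.mpr ?_)
      have h1 := hle i
      rw [hk_sum_single_apply, if_pos hi] at h1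
      omega
    · obtain ⟨i, rfl⟩ := hs
      exact Or.inl ⟨i, not_lt.mpr (Finsupp.single_le_iff.mp hle)⟩
  · rintro (⟨i, hi⟩ | hsupp)
    · exact ⟨Finsupp.single i q, Or.inr ⟨i, rfl⟩, Finsupp.single_le_iff.mpr (not_lt.mp hi)⟩
    · refine ⟨∑ i ∈ e.support, Finsupp.single i 1, Or.inl ⟨e.support, hsupp, rfl⟩, fun j => ?_⟩
      rw [hk_sum_single_apply]
      split
      · exact Nat.one_le_iff_ne_zero.mpr (Finsupp.mem_support_iff.mp ‹_›)
      · exact Nat.zero_le _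

end Aux
section Aux2
variable {k : Type*} [Field k] {n q : ℕ} {K : Finset (Finset (Fin n))}


/-- Equivalence between good exponent finsupps and bounded functions. -/
noncomputable def hkEquiv (n q : ℕ) (K : Finset (Finset (Fin n))) [NeZero q] :
    {e : Fin n →₀ ℕ // (∀ i, e i < q) ∧ e.support ∈ K} ≃
      {a : Fin n → Fin q // Finset.univ.filter (fun i => a i ≠ 0) ∈ K} where
  toFun e := ⟨fun i => ⟨e.1 i, e.2.1 i⟩, by
    have h : (Finset.univ.filter fun i => (⟨e.1 i, e.2.1 i⟩ : Fin q) ≠ 0) = e.1.support := by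
      ext i
      simp [Finsupp.mem_support_iff, Fin.ext_iff]
    rw [h]; exact e.2.2⟩
  invFun a := ⟨Finsupp.equivFunOnFinite.symm fun i => ((a.1 i : ℕ)), fun i => (a.1 i).2, by
    have h : (Finsupp.equivFunOnFinite.symm fun i => ((a.1 i : ℕ))).support
        = Finset.univ.filter fun i => a.1 i ≠ 0 := by
      ext i
      simp only [Finsupp.mem_support_iff, Finset.mem_filter, Finset.mem_univ, true_and,
        Finsupp.equivFunOnFinite_symm_apply_apply, ne_eq]
      exact not_congr ⟨fun h => Fin.ext (by simpa using h), fun h => by simp [h]⟩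
    rw [h]; exact a.2⟩
  left_inv e := by
    apply Subtype.ext
    apply Finsupp.ext
    intro i
    simp
  right_inv a := by
    apply Subtype.ext
    funext i
    apply Fin.ext
    simp

lemma hk_finrank (hK : ∀ σ ∈ K, ∀ τ : Finset (Fin n), τ ⊆ σ → τ ∈ K) [NeZero q]
    (J : Ideal (MvPolynomial (Fin n) k))
    (hJ : ∀ f, f ∈ J ↔ ∀ e ∈ f.support, ¬((∀ i, e i < q) ∧ e.support ∈ K)) :
    Module.finrank k (MvPolynomial (Fin n) k ⧸ J) =
      Fintype.card {a : Fin n → Fin q // Finset.univ.filter (fun i => a i ≠ 0) ∈ K} := by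
  classical
  set G := {e : Fin n →₀ ℕ // (∀ i, e i < q) ∧ e.support ∈ K}
  haveI : Fintype G := Fintype.ofEquiv _ (hkEquiv n q K).symm
  have hli : LinearIndependent k
      (fun e : G => Ideal.Quotient.mk J (monomial e.1 (1 : k))) := by
    rw [linearIndependent_iff]
    intro l hl
    have hmem : (l.sum fun e c => monomial e.1 c) ∈ J := by
      rw [← Ideal.Quotient.eq_zero_iff_mem]
      rw [← hl, Finsupp.linearCombination_apply, Finsupp.sum, Finsupp.sum,
        ← Ideal.Quotient.mkₐ_eq_mk k, map_sum]
      refine Finset.sum_congr rfl fun e he => ?_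
      rw [← map_smul (Ideal.Quotient.mkₐ k J)]
      congr 1
      rw [smul_monomial, smul_eq_mul, mul_one]
    ext e0
    by_contra hne
    have hco : coeff e0.1 (l.sum fun e c => monomial e.1 c) = l e0 := by
      rw [Finsupp.sum, coeff_sum]
      rw [Finset.sum_eq_single e0]
      · rw [coeff_monomial, if_pos rfl]
      · intro e _ hne'
        rw [coeff_monomial, if_neg fun h => hne' (Subtype.ext h)]
      · intro h
        rw [coeff_monomial, if_pos rfl, Finsupp.notMem_support_iff.mp h]
    have hs : e0.1 ∈ (l.sum fun e c => monomial e.1 c).support :=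
      mem_support_iff.mpr (by rw [hco]; simpa using hne)
    exact (hJ _).mp hmem e0.1 hs e0.2
  have hsp : ⊤ ≤ Submodule.span k
      (Set.range fun e : G => Ideal.Quotient.mk J (monomial e.1 (1 : k))) := by
    rintro x -
    obtain ⟨f, rfl⟩ := Ideal.Quotient.mk_surjective x
    rw [f.as_sum, ← Ideal.Quotient.mkₐ_eq_mk k, map_sum]
    refine Submodule.sum_mem _ fun e he => ?_
    rw [Ideal.Quotient.mkₐ_eq_mk]
    by_cases hPe : (∀ i, e i < q) ∧ e.support ∈ K
    · have h1 : Ideal.Quotient.mk J (monomial e (coeff e f)) =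
          coeff e f • Ideal.Quotient.mk J (monomial e (1 : k)) := by
        rw [← Ideal.Quotient.mkₐ_eq_mk k, ← map_smul (Ideal.Quotient.mkₐ k J)]
        congr 1
        rw [smul_monomial, smul_eq_mul, mul_one]
      rw [h1]
      exact Submodule.smul_mem _ _ (Submodule.subset_span ⟨⟨e, hPe⟩, rfl⟩)
    · have hmem : monomial e (coeff e f) ∈ J := by
        rw [hJ]
        intro e' he'
        rw [support_monomial] at he'
        split at he'
        · simp at he'
        · rw [Finset.mem_singleton] at he'
          subst he'
          exact hPe
      rw [Ideal.Quotient.eq_zero_iff_mem.mpr hmem]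
      exact Submodule.zero_mem _
  rw [Module.finrank_eq_card_basis (Module.Basis.mk hli hsp)]
  exact Fintype.card_congr (hkEquiv n q K)

end Aux2

lemma hk_sup_eq' (k : Type*) [Field k] (n q : ℕ) (K : Finset (Finset (Fin n))) :
    SRIdeal k n K ⊔ Ideal.span {f : MvPolynomial (Fin n) k | ∃ i : Fin n, f = X i ^ q} =
      Ideal.span ((fun s => monomial s (1 : k)) '' hkBad n q K) :=
  hk_sup_eq k n q K

section Aux3
variable {n q : ℕ} {K : Finset (Finset (Fin n))}

lemma hk_fiber_card [NeZero q] (σ : Finset (Fin n)) :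
    (Finset.univ.filter fun a : Fin n → Fin q =>
        Finset.univ.filter (fun i => a i ≠ 0) = σ).card = (q - 1) ^ σ.card := by
  classical
  have hset : (Finset.univ.filter fun a : Fin n → Fin q =>
      Finset.univ.filter (fun i => a i ≠ 0) = σ) =
      Fintype.piFinset (fun i => if i ∈ σ then Finset.univ.filter (· ≠ (0 : Fin q)) else {0}) := by
    ext a
    simp only [Finset.mem_filter, Finset.mem_univ, true_and, Fintype.mem_piFinset]
    constructor
    · intro h i
      by_cases hi : i ∈ σ
      · rw [if_pos hi]
        simp only [Finset.mem_filter, Finset.mem_univ, true_and]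
        rw [← h] at hi
        simpa using (Finset.mem_filter.mp hi).2
      · rw [if_neg hi, Finset.mem_singleton]
        by_contra hne
        exact hi (h ▸ Finset.mem_filter.mpr ⟨Finset.mem_univ _, hne⟩)
    · intro h
      ext i
      simp only [Finset.mem_filter, Finset.mem_univ, true_and]
      constructor
      · intro hne
        by_contra hi
        have := h i
        rw [if_neg hi, Finset.mem_singleton] at this
        exact hne this
      · intro hi
        have := h i
        rw [if_pos hi] at this
        simpa using this
  rw [hset, Fintype.card_piFinset]
  have h1 : ∀ i : Fin n,
      (if i ∈ σ then Finset.univ.filter (· ≠ (0 : Fin q)) else {0}).card =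
        if i ∈ σ then q - 1 else 1 := by
    intro i
    split
    · rw [Finset.filter_ne', Finset.card_erase_of_mem (Finset.mem_univ _),
        Finset.card_univ, Fintype.card_fin]
    · rw [Finset.card_singleton]
  simp_rw [h1]
  rw [Finset.prod_ite_mem, Finset.univ_inter, Finset.prod_const]

lemma hk_count [NeZero q] (d : ℕ) (hd : ∀ σ ∈ K, σ.card ≤ d + 1) :
    Fintype.card {a : Fin n → Fin q // Finset.univ.filter (fun i => a i ≠ 0) ∈ K} =
      ∑ j ∈ Finset.range (d + 2), (K.filter fun σ => σ.card = j).card * (q - 1) ^ j := by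
  classical
  rw [Fintype.card_subtype]
  rw [Finset.card_eq_sum_card_fiberwise
    (s := Finset.univ.filter fun a : Fin n → Fin q => Finset.univ.filter (fun i => a i ≠ 0) ∈ K)
    (f := fun a : Fin n → Fin q => Finset.univ.filter (fun i => a i ≠ 0)) (t := K)
    (fun a ha => (Finset.mem_filter.mp ha).2)]
  have h2 : ∀ σ ∈ K, ((Finset.univ.filter fun a : Fin n → Fin q =>
      Finset.univ.filter (fun i => a i ≠ 0) ∈ K).filter fun a =>
        Finset.univ.filter (fun i => a i ≠ 0) = σ).card = (q - 1) ^ σ.card := by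
    intro σ hσ
    rw [Finset.filter_filter]
    have hcongr : Finset.filter (fun a : Fin n → Fin q =>
        Finset.univ.filter (fun i => a i ≠ 0) ∈ K ∧
          Finset.univ.filter (fun i => a i ≠ 0) = σ) Finset.univ =
        Finset.filter (fun a : Fin n → Fin q =>
          Finset.univ.filter (fun i => a i ≠ 0) = σ) Finset.univ :=
      Finset.filter_congr fun a _ => by
        by_cases h : Finset.univ.filter (fun i => a i ≠ 0) = σ <;> simp [h, hσ]
    rw [hcongr]
    exact hk_fiber_card σ
  rw [Finset.sum_congr rfl h2]
  rw [← Finset.sum_fiberwise_of_maps_to (g := fun σ : Finset (Fin n) => σ.card)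
    (t := Finset.range (d + 2)) (fun σ hσ => Finset.mem_range.mpr (Nat.lt_succ_of_le (hd σ hσ))) (fun σ => (q - 1) ^ σ.card)]
  refine Finset.sum_congr rfl fun j hj => ?_
  rw [Finset.sum_congr rfl (fun σ hσ => by
    rw [(Finset.mem_filter.mp hσ).2])]
  rw [Finset.sum_const, smul_eq_mul]

end Aux3

/-- The Hilbert–Kunz function of a face ring: for `q = p^r`,
`HK_R(q) = length(R/m^{[q]}) = Σ_{i=-1}^{dim K} f_i (q-1)^{i+1}` (the summand for
`j = i + 1` counts the `i`-dimensional faces, `f_{-1} = 1` counting the empty face). -/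
theorem stmt14 (k : Type*) [Field k] (p : ℕ) [Fact p.Prime] [CharP k p]
    (r q : ℕ) (hq : q = p ^ r) (n : ℕ) (K : Finset (Finset (Fin n)))
    (hK : ∀ σ ∈ K, ∀ τ : Finset (Fin n), τ ⊆ σ → τ ∈ K) (h0 : ∅ ∈ K)
    (d : ℕ) (hd : ∀ σ ∈ K, σ.card ≤ d + 1) :
    Module.finrank k ((FaceRing k n K) ⧸
        Ideal.span {f : FaceRing k n K | ∃ i : Fin n,
          f = Ideal.Quotient.mk (SRIdeal k n K) (X i ^ q)}) =
      ∑ j ∈ Finset.range (d + 2),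
        (K.filter (fun σ => σ.card = j)).card * (q - 1) ^ j := by
  classical
  have hq0 : 0 < q := hq ▸ Nat.pow_pos (n := r) (Nat.Prime.pos (Fact.out : p.Prime))
  haveI : NeZero q := ⟨hq0.ne'⟩
  have hspan : Ideal.span {f : FaceRing k n K | ∃ i : Fin n,
      f = Ideal.Quotient.mk (SRIdeal k n K) (X i ^ q)} =
      Ideal.map (Ideal.Quotient.mkₐ k (SRIdeal k n K))
        (Ideal.span {f : MvPolynomial (Fin n) k | ∃ i : Fin n, f = X i ^ q}) := by
    rw [Ideal.map_span]
    congr 1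
    ext g
    simp only [Set.mem_image, Set.mem_setOf_eq, Ideal.Quotient.mkₐ_eq_mk]
    constructor
    · rintro ⟨i, rfl⟩
      exact ⟨X i ^ q, ⟨i, rfl⟩, rfl⟩
    · rintro ⟨x, ⟨i, rfl⟩, rfl⟩
      exact ⟨i, rfl⟩
  rw [hspan,
    LinearEquiv.finrank_eq (AlgEquiv.toLinearEquiv
      (DoubleQuot.quotQuotEquivQuotSupₐ k (SRIdeal k n K)
        (Ideal.span {f : MvPolynomial (Fin n) k | ∃ i : Fin n, f = X i ^ q}))),
    hk_sup_eq' k n q K,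
    hk_finrank hK _ (fun f => hk_mem_iff hK f),
    hk_count d hd]
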